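/- Let γ ≥ 2 be a real number, let d ≥ 0 and q ≥ 1 be integers, and for each i ∈ [d] let d_i ≥ 0 and q_i be integers with q_i ≥ d_i + γ and q_i ≤ q. Define ξ_i := (1 + 1/(γ−1))^{γ d_i/(q_i−1)}. Let p_1, …, p_d ∈ [0,1]^q be subdistributions with all entries of p_i at most ξ_i/(q_i − 1 + ξ_i). Then for every color c ∈ [q], g_c(p_1, …, p_d) · Σ_{i=1}^d p_i(c) ≤ (1/(e·q)) · exp((1/q) Σ_{i=1}^d ((q_i − 1)/ξ_i + 1)·ln(1 + ξ_i/(q_i − 1))), where g is the coloring tree recursion. -/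

import Mathlib

open Finset

/-- The coloring tree recursion:
`g_c(p_1, …, p_d) = Π_i (1 − p_i(c)) / Σ_b Π_i (1 − p_i(b))`. -/
noncomputable def colorRec {q d : ℕ} (p : Fin d → Fin q → ℝ) (c : Fin q) : ℝ :=
  (∏ i, (1 - p i c)) / (∑ b, ∏ i, (1 - p i b))

/-- `ξ_γ(d', q') = (1 + 1/(γ−1))^(γd'/(q'−1))`. -/
noncomputable def xiGen (γ : ℝ) (d' q' : ℕ) : ℝ :=
  (1 + 1 / (γ - 1)) ^ ((γ * (d' : ℝ)) / ((q' : ℝ) - 1))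

lemma chord_bound {x B : ℝ} (hx : 0 ≤ x) (hxB : x ≤ B) (hB0 : 0 < B) (hB1 : B < 1) :
    (1 - B) ^ (x / B) ≤ 1 - x := by
  have h1B : (0:ℝ) < 1 - B := by linarith
  have ht0 : 0 ≤ x / B := div_nonneg hx hB0.le
  have ht1 : x / B ≤ 1 := (div_le_one hB0).2 hxB
  have hkey := convexOn_exp.2 (Set.mem_univ (0:ℝ)) (Set.mem_univ (Real.log (1-B)))
      (by linarith : (0:ℝ) ≤ 1 - x/B) ht0 (by ring)
  simp only [smul_eq_mul, mul_zero, zero_add, Real.exp_zero, mul_one,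
    Real.exp_log h1B] at hkey
  rw [Real.rpow_def_of_pos h1B]
  calc Real.exp (Real.log (1-B) * (x/B)) = Real.exp ((x/B) * Real.log (1-B)) := by ring_nf
    _ ≤ (1 - x/B) + (x/B) * (1-B) := hkey
    _ = 1 - x := by field_simp; ring

lemma self_mul_exp_neg_le {S : ℝ} : S * Real.exp (-S) ≤ Real.exp (-1) := by
  have h := Real.add_one_le_exp (S - 1)
  have hS : S ≤ Real.exp (S - 1) := by linarith
  calc S * Real.exp (-S) ≤ Real.exp (S-1) * Real.exp (-S) :=
        mul_le_mul_of_nonneg_right hS (Real.exp_nonneg _)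
    _ = Real.exp (-1) := by rw [← Real.exp_add]; ring_nf

/-- Amortized marginal bound: if each child `i` has parameters `(d_i, q_i)` with
`q_i ≥ d_i + γ`, `q_i ≤ q`, and `p_i` has entries at most `ξ_i/(q_i − 1 + ξ_i)`, then
`g_c · Σ_i p_i(c) ≤ (1/(e·q))·exp((1/q) Σ_i ((q_i−1)/ξ_i + 1)·ln(1 + ξ_i/(q_i−1)))`. -/
theorem amortized_marginal_bound (γ : ℝ) (hγ : 2 ≤ γ) (d q : ℕ) (hq : 1 ≤ q)
    (dc qc : Fin d → ℕ)
    (hqi : ∀ i, (dc i : ℝ) + γ ≤ (qc i : ℝ)) (hqiq : ∀ i, qc i ≤ q)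
    (p : Fin d → Fin q → ℝ)
    (h0 : ∀ i c, 0 ≤ p i c)
    (hB : ∀ i c, p i c ≤
      xiGen γ (dc i) (qc i) / ((qc i : ℝ) - 1 + xiGen γ (dc i) (qc i)))
    (hsub : ∀ i, ∑ c, p i c ≤ 1) :
    ∀ c, colorRec p c * ∑ i, p i c ≤
      (1 / (Real.exp 1 * (q : ℝ))) *
        Real.exp ((1 / (q : ℝ)) * ∑ i,
          (((qc i : ℝ) - 1) / xiGen γ (dc i) (qc i) + 1) *
            Real.log (1 + xiGen γ (dc i) (qc i) / ((qc i : ℝ) - 1))) := by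
  intro c
  have hqR : (0:ℝ) < (q:ℝ) := by exact_mod_cast hq
  have hγ1 : (1:ℝ) ≤ γ - 1 := by linarith
  set ξ : Fin d → ℝ := fun i => xiGen γ (dc i) (qc i) with hξdef
  have hq1 : ∀ i, (1:ℝ) ≤ (qc i : ℝ) - 1 := fun i => by
    have h := hqi i
    have h2 : (0:ℝ) ≤ (dc i : ℝ) := Nat.cast_nonneg _
    linarith
  have hξ1 : ∀ i, 1 ≤ ξ i := fun i => by
    apply Real.one_le_rpow
    · have h2 : (0:ℝ) ≤ 1/(γ-1) := by positivity
      linarith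
    · have h3 := hq1 i
      have h4 : (0:ℝ) ≤ (dc i:ℝ) := Nat.cast_nonneg _
      have h5 : (0:ℝ) < γ := by linarith
      positivity
  set B : Fin d → ℝ := fun i => ξ i / ((qc i:ℝ) - 1 + ξ i) with hBdef
  have hden : ∀ i, 0 < (qc i:ℝ) - 1 + ξ i := fun i => by
    have := hq1 i; have := hξ1 i; linarith
  have hB0 : ∀ i, 0 < B i := fun i => div_pos (by have := hξ1 i; linarith) (hden i)
  have hB1 : ∀ i, B i < 1 := fun i => (div_lt_one (hden i)).2 (by have := hq1 i; linarith)
  have h1Bpos : ∀ i, 0 < 1 - B i := fun i => by have := hB1 i; linarith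
  have hpB : ∀ i b, p i b ≤ B i := fun i b => hB i b
  -- numerator bound
  set S := ∑ i, p i c with hSdef
  have hS0 : 0 ≤ S := Finset.sum_nonneg fun i _ => h0 i c
  have hNle : (∏ i, (1 - p i c)) ≤ Real.exp (-S) := by
    have : (∏ i, (1 - p i c)) ≤ ∏ i, Real.exp (-(p i c)) := by
      apply Finset.prod_le_prod
      · intro i _; have := hpB i c; have := hB1 i; linarith
      · intro i _; have := Real.add_one_le_exp (-(p i c)); linarith
    calc (∏ i, (1 - p i c)) ≤ ∏ i, Real.exp (-(p i c)) := this
      _ = Real.exp (∑ i, -(p i c)) := (Real.exp_sum _ _).symm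
      _ = Real.exp (-S) := by rw [← Finset.sum_neg_distrib]
  -- denominator bound
  set K : ℝ := ∏ i, (1 - B i) ^ ((1:ℝ) / B i) with hKdef
  have hKpos : 0 < K := Finset.prod_pos fun i _ => Real.rpow_pos_of_pos (h1Bpos i) _
  set X : Fin q → ℝ := fun b => ∏ i, (1 - p i b) with hXdef
  have hX0 : ∀ b, 0 ≤ X b := fun b => Finset.prod_nonneg fun i _ => by
    have := hpB i b; have := hB1 i; linarith
  have hKprod : K ≤ ∏ b, X b := by
    have hswap : (∏ b, X b) = ∏ i, ∏ b, (1 - p i b) := Finset.prod_comm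
    rw [hswap]
    apply Finset.prod_le_prod
    · intro i _; exact (Real.rpow_pos_of_pos (h1Bpos i) _).le
    · intro i _
      have step1 : (1 - B i) ^ ((1:ℝ) / B i) ≤ (1 - B i) ^ ((∑ b, p i b) / B i) := by
        apply Real.rpow_le_rpow_of_exponent_ge (h1Bpos i) (by have := hB0 i; linarith)
        exact div_le_div_of_nonneg_right (hsub i) (hB0 i).le
      have step2 : (1 - B i) ^ ((∑ b, p i b) / B i) ≤ ∏ b, (1 - p i b) := by
        have : (1 - B i) ^ ((∑ b, p i b) / B i) = ∏ b, (1 - B i) ^ (p i b / B i) := by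
          rw [← Real.rpow_sum_of_pos (h1Bpos i), Finset.sum_div]
        rw [this]
        apply Finset.prod_le_prod
        · intro b _; exact (Real.rpow_pos_of_pos (h1Bpos i) _).le
        · intro b _; exact chord_bound (h0 i b) (hpB i b) (hB0 i) (hB1 i)
      exact step1.trans step2
  have hAMGM : K ^ ((1:ℝ)/q) ≤ (1/(q:ℝ)) * ∑ b, X b := by
    have h1 := Real.geom_mean_le_arith_mean_weighted Finset.univ
        (fun _ : Fin q => (1:ℝ)/q) X (fun _ _ => by positivity)
        (by simp [Finset.card_univ]; field_simp) (fun b _ => hX0 b)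
    have h2 : (∏ b, X b ^ ((1:ℝ)/q)) = (∏ b, X b) ^ ((1:ℝ)/q) :=
      Real.finset_prod_rpow _ _ (fun b _ => hX0 b) _
    have h3 : K ^ ((1:ℝ)/q) ≤ (∏ b, X b) ^ ((1:ℝ)/q) :=
      Real.rpow_le_rpow hKpos.le hKprod (by positivity)
    calc K ^ ((1:ℝ)/q) ≤ (∏ b, X b) ^ ((1:ℝ)/q) := h3
      _ = ∏ b, X b ^ ((1:ℝ)/q) := h2.symm
      _ ≤ ∑ b, (1/(q:ℝ)) * X b := h1
      _ = (1/(q:ℝ)) * ∑ b, X b := by rw [Finset.mul_sum]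
  -- identify A
  set A := ∑ i, (((qc i : ℝ) - 1) / ξ i + 1) * Real.log (1 + ξ i / ((qc i : ℝ) - 1)) with hAdef
  have hKA : K ^ ((1:ℝ)/q) = Real.exp (-(1/(q:ℝ)) * A) := by
    have hlogK : Real.log K = -A := by
      rw [hKdef, Real.log_prod (fun i _ => (Real.rpow_pos_of_pos (h1Bpos i) _).ne')]
      rw [hAdef, ← Finset.sum_neg_distrib]
      apply Finset.sum_congr rfl
      intro i _
      rw [Real.log_rpow (h1Bpos i)]
      have hξpos : 0 < ξ i := lt_of_lt_of_le one_pos (hξ1 i)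
      have hq1i := hq1 i
      have e1 : (1:ℝ) / B i = ((qc i : ℝ) - 1) / ξ i + 1 := by
        rw [hBdef]; field_simp
      have e2 : (1 : ℝ) - B i = (1 + ξ i / ((qc i : ℝ) - 1))⁻¹ := by
        rw [hBdef]; field_simp; ring
      rw [e1, e2, Real.log_inv]
      ring
    rw [← Real.exp_log (Real.rpow_pos_of_pos hKpos ((1:ℝ)/q)),
      Real.log_rpow hKpos, hlogK]
    ring_nf
  -- final combination
  have hDpos : 0 < ∑ b, X b := by
    have h1 : (0:ℝ) < (q:ℝ) * K ^ ((1:ℝ)/q) := by positivity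
    have h2 := mul_le_mul_of_nonneg_left hAMGM hqR.le
    have h3 : (q:ℝ) * ((1/(q:ℝ)) * ∑ b, X b) = ∑ b, X b := by field_simp
    rw [h3] at h2; linarith
  have hNS : (∏ i, (1 - p i c)) * S ≤ Real.exp (-1) := by
    have h1 : (∏ i, (1 - p i c)) * S ≤ Real.exp (-S) * S :=
      mul_le_mul_of_nonneg_right hNle hS0
    have h2 : Real.exp (-S) * S ≤ Real.exp (-1) := by
      rw [mul_comm]; exact self_mul_exp_neg_le
    linarith
  have hDlow : (q:ℝ) * Real.exp (-(1/(q:ℝ)) * A) ≤ ∑ b, X b := by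
    rw [← hKA]
    calc (q:ℝ) * K ^ ((1:ℝ)/q) ≤ (q:ℝ) * ((1/(q:ℝ)) * ∑ b, X b) :=
          mul_le_mul_of_nonneg_left hAMGM hqR.le
      _ = ∑ b, X b := by field_simp
  have hNSnn : 0 ≤ (∏ i, (1 - p i c)) * S :=
    mul_nonneg (Finset.prod_nonneg fun i _ => by
      have := hpB i c; have := hB1 i; linarith) hS0
  have hfinal : colorRec p c * S = ((∏ i, (1 - p i c)) * S) / (∑ b, X b) := by
    rw [colorRec]; ring
  rw [hfinal]
  have hdenpos : (0:ℝ) < (q:ℝ) * Real.exp (-(1/(q:ℝ)) * A) := by positivity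
  calc ((∏ i, (1 - p i c)) * S) / (∑ b, X b)
      ≤ Real.exp (-1) / ((q:ℝ) * Real.exp (-(1/(q:ℝ)) * A)) :=
        div_le_div₀ (Real.exp_nonneg _) hNS hdenpos hDlow
    _ = (1 / (Real.exp 1 * (q : ℝ))) * Real.exp ((1 / (q : ℝ)) * A) := by
        rw [Real.exp_neg, neg_mul, Real.exp_neg]
        field_simp
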